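/- Let f, g be analytic on the unit disk with f(0)=g(0)=0, f'(0)=g'(0)=1, f(z)/g(z) and g(z)/z having positive real part on the unit disk (and f, g nonvanishing on 𝔻∖{0}). Then for |z| = r < 1, |z f'(z)/f(z) − 1| ≤ 4r/(1−r²). -/

import Mathlib

open Metric Set Complex

noncomputable def moeb (a : ℂ) : ℂ → ℂ := fun x => (x + a) / (1 + (starRingEnd ℂ) a * x)

lemma moeb_normSq (a ζ : ℂ) :
    normSq (1 + (starRingEnd ℂ) a * ζ) - normSq (ζ + a)
      = (1 - normSq a) * (1 - normSq ζ) := by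
  simp [normSq_apply, Complex.add_re, Complex.add_im, Complex.mul_re, Complex.mul_im]
  ring

lemma moeb_denom_ne {a ζ : ℂ} (ha : ‖a‖ < 1) (hζ : ‖ζ‖ < 1) :
    (1 + (starRingEnd ℂ) a * ζ) ≠ 0 := by
  intro h
  have h2 : (starRingEnd ℂ) a * ζ = -1 := by linear_combination h
  have : ‖(starRingEnd ℂ) a * ζ‖ = 1 := by rw [h2]; simp
  rw [norm_mul, Complex.norm_conj] at this
  nlinarith [norm_nonneg a, norm_nonneg ζ]

lemma moeb_mapsTo {a : ℂ} (ha : a ∈ ball (0:ℂ) 1) :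
    MapsTo (moeb a) (ball 0 1) (ball 0 1) := by
  intro ζ hζ
  rw [mem_ball_zero_iff] at *
  have hd := moeb_denom_ne ha hζ
  have hlt : normSq (ζ + a) < normSq (1 + (starRingEnd ℂ) a * ζ) := by
    have := moeb_normSq a ζ
    have h1 : normSq a < 1 := by rw [normSq_eq_norm_sq]; nlinarith [norm_nonneg a]
    have h2 : normSq ζ < 1 := by rw [normSq_eq_norm_sq]; nlinarith [norm_nonneg ζ]
    nlinarith
  have habs : ‖ζ + a‖ < ‖1 + (starRingEnd ℂ) a * ζ‖ := by
    have := Complex.sq_norm (ζ + a)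
    have := Complex.sq_norm (1 + (starRingEnd ℂ) a * ζ)
    nlinarith [norm_nonneg (ζ + a), norm_nonneg (1 + (starRingEnd ℂ) a * ζ)]
  rw [moeb, norm_div]
  calc ‖ζ + a‖ / ‖1 + (starRingEnd ℂ) a * ζ‖ < 1 := by
        rw [div_lt_one ((norm_nonneg _).trans_lt habs)]; exact habs

lemma moeb_hasDerivAt (a ζ : ℂ) (h : (1 + (starRingEnd ℂ) a * ζ) ≠ 0) :
    HasDerivAt (moeb a)
      ((1 - a * (starRingEnd ℂ) a) / (1 + (starRingEnd ℂ) a * ζ) ^ 2) ζ := by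
  have h1 : HasDerivAt (fun x : ℂ => x + a) 1 ζ := (hasDerivAt_id ζ).add_const a
  have h2 : HasDerivAt (fun x : ℂ => 1 + (starRingEnd ℂ) a * x) ((starRingEnd ℂ) a) ζ := by
    simpa using ((hasDerivAt_id ζ).const_mul ((starRingEnd ℂ) a)).const_add 1
  have : HasDerivAt (fun x => (x + a) / (1 + (starRingEnd ℂ) a * x)) _ ζ := h1.div h2 h
  convert this using 1
  congr 1
  ring

lemma moeb_diffOn {a : ℂ} (ha : a ∈ ball (0:ℂ) 1) :
    DifferentiableOn ℂ (moeb a) (ball 0 1) := by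
  intro ζ hζ
  rw [mem_ball_zero_iff] at ha hζ
  exact ((moeb_hasDerivAt a ζ (moeb_denom_ne ha hζ)).differentiableAt).differentiableWithinAt

lemma schwarzPick {w : ℂ → ℂ} (hd : DifferentiableOn ℂ w (ball 0 1))
    (hm : MapsTo w (ball 0 1) (ball 0 1)) {z : ℂ} (hz : z ∈ ball (0:ℂ) 1) :
    ‖deriv w z‖ * (1 - ‖z‖ ^ 2) ≤ 1 - ‖w z‖ ^ 2 := by
  have hb : w z ∈ ball (0:ℂ) 1 := hm hz
  have hbneg : -(w z) ∈ ball (0:ℂ) 1 := by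
    rw [mem_ball_zero_iff] at *; simpa using hb
  rw [mem_ball_zero_iff] at hz hb
  set a := z with ha
  set b := w z with hbdef
  -- F = moeb (-b) ∘ w ∘ moeb a
  set F := moeb (-b) ∘ w ∘ moeb a with hF
  have hza : a ∈ ball (0:ℂ) 1 := mem_ball_zero_iff.2 hz
  have hFd : DifferentiableOn ℂ F (ball 0 1) :=
    ((moeb_diffOn hbneg).comp (hd.comp (moeb_diffOn hza) (moeb_mapsTo hza))
      (hm.comp (moeb_mapsTo hza)))
  have hFm : MapsTo F (ball 0 1) (ball 0 1) :=
    (moeb_mapsTo hbneg).comp ((hm.comp (moeb_mapsTo hza)))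
  have hmoeb0 : moeb a 0 = a := by simp [moeb]
  have hF0 : F 0 = 0 := by
    simp only [hF, Function.comp_apply, hmoeb0, moeb, ← hbdef]
    simp
    exact Or.inl (by simp [hbdef, ha])
  -- derivative computation
  have hden_a : (1 + (starRingEnd ℂ) a * 0) ≠ 0 := by simp
  have hφ : HasDerivAt (moeb a) ((1 - a * (starRingEnd ℂ) a) / (1 + (starRingEnd ℂ) a * 0) ^ 2) 0 :=
    moeb_hasDerivAt a 0 hden_a
  have hφ' : HasDerivAt (moeb a) (1 - a * (starRingEnd ℂ) a) 0 := by
    convert hφ using 1; simp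
  have hw : HasDerivAt w (deriv w a) a :=
    (hd.differentiableAt (isOpen_ball.mem_nhds (mem_ball_zero_iff.2 hz))).hasDerivAt
  have hden_b : (1 + (starRingEnd ℂ) (-b) * b) ≠ 0 := by
    have : (starRingEnd ℂ) b * b = (normSq b : ℂ) := by
      rw [mul_comm]; exact Complex.mul_conj b
    simp only [map_neg, neg_mul, this]
    intro hc
    have : (normSq b : ℂ) = 1 := by linear_combination -hc
    have h2 : normSq b = 1 := by exact_mod_cast this
    rw [normSq_eq_norm_sq] at h2
    nlinarith [norm_nonneg b]
  have hψ : HasDerivAt (moeb (-b))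
      ((1 - (-b) * (starRingEnd ℂ) (-b)) / (1 + (starRingEnd ℂ) (-b) * b) ^ 2) b :=
    moeb_hasDerivAt (-b) b hden_b
  have hw' : HasDerivAt w (deriv w a) (moeb a 0) := by rw [hmoeb0]; exact hw
  have hwφ : HasDerivAt (w ∘ moeb a) (deriv w a * (1 - a * (starRingEnd ℂ) a)) 0 :=
    hw'.comp 0 hφ'
  have hψ' : HasDerivAt (moeb (-b))
      ((1 - (-b) * (starRingEnd ℂ) (-b)) / (1 + (starRingEnd ℂ) (-b) * b) ^ 2)
      ((w ∘ moeb a) 0) := by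
    rw [Function.comp_apply, hmoeb0]; exact hψ
  have hFdd : HasDerivAt F
      (((1 - (-b) * (starRingEnd ℂ) (-b)) / (1 + (starRingEnd ℂ) (-b) * b) ^ 2)
        * (deriv w a * (1 - a * (starRingEnd ℂ) a))) 0 := hψ'.comp 0 hwφ
  have hle : ‖deriv F 0‖ ≤ 1 :=
    Complex.norm_deriv_le_one_of_mapsTo_ball hFd
      (by rw [hF0]; exact hFm.mono_right ball_subset_closedBall) one_pos
  rw [hFdd.deriv] at hle
  -- now simplify absolute values
  have hconj : ∀ x : ℂ, 1 - x * (starRingEnd ℂ) x = ((1 - normSq x : ℝ) : ℂ) := by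
    intro x; rw [Complex.mul_conj]; push_cast; ring
  have hba : (1 - (-b) * (starRingEnd ℂ) (-b)) = ((1 - normSq b : ℝ) : ℂ) := by
    rw [map_neg, neg_mul_neg, hconj b]
  have hbb : (1 + (starRingEnd ℂ) (-b) * b) = ((1 - normSq b : ℝ) : ℂ) := by
    rw [map_neg, neg_mul, mul_comm, Complex.mul_conj]; push_cast; ring
  have hnb : normSq b = ‖b‖ ^ 2 := normSq_eq_norm_sq b
  have hna : normSq a = ‖a‖ ^ 2 := normSq_eq_norm_sq a
  have hbpos : (0:ℝ) < 1 - normSq b := by rw [hnb]; nlinarith [norm_nonneg b]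
  have hapos : (0:ℝ) < 1 - normSq a := by rw [hna]; nlinarith [norm_nonneg a]
  rw [hba, hbb, hconj a, norm_mul, norm_mul, norm_div, norm_pow] at hle
  rw [Complex.norm_of_nonneg hbpos.le, Complex.norm_of_nonneg hapos.le] at hle
  have h1 : (1 - normSq b) / (1 - normSq b) ^ 2 = (1 - normSq b)⁻¹ := by
    field_simp
  rw [h1] at hle
  rw [inv_mul_le_iff₀ hbpos, mul_one] at hle
  calc ‖deriv w z‖ * (1 - ‖z‖ ^ 2)
      = ‖deriv w a‖ * (1 - normSq a) := by rw [hna]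
    _ ≤ 1 - normSq b := hle
    _ = 1 - ‖w z‖ ^ 2 := by rw [hnb]

lemma carath {h : ℂ → ℂ} (hd : DifferentiableOn ℂ h (ball 0 1))
    (hre : ∀ x ∈ ball (0:ℂ) 1, 0 < (h x).re) {z : ℂ} (hz : z ∈ ball (0:ℂ) 1) :
    ‖deriv h z‖ * (1 - ‖z‖ ^ 2) ≤ 2 * (h z).re := by
  set w := fun x => (h x - 1) / (h x + 1) with hwdef
  have hden : ∀ x ∈ ball (0:ℂ) 1, h x + 1 ≠ 0 := by
    intro x hx hc
    have h1 := hre x hx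
    have h2 : (h x + 1).re = 0 := by rw [hc]; simp
    simp only [Complex.add_re, Complex.one_re] at h2
    linarith
  have hwd : DifferentiableOn ℂ w (ball 0 1) :=
    (hd.sub_const 1).div (hd.add_const 1) hden
  have hkey : ∀ v : ℂ, normSq (v + 1) - normSq (v - 1) = 4 * v.re := by
    intro v; simp [normSq_apply]; ring
  have hwm : MapsTo w (ball 0 1) (ball 0 1) := by
    intro x hx
    rw [mem_ball_zero_iff]
    have hd0 := hden x hx
    have hrex := hre x hx
    have hlt : normSq (h x - 1) < normSq (h x + 1) := by
      have := hkey (h x); nlinarith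
    have habs : ‖h x - 1‖ < ‖h x + 1‖ := by
      have e1 := Complex.sq_norm (h x - 1); have e2 := Complex.sq_norm (h x + 1)
      nlinarith [norm_nonneg (h x - 1), norm_nonneg (h x + 1)]
    simp only [hwdef, norm_div]
    rw [div_lt_one ((norm_nonneg _).trans_lt habs)]
    exact habs
  have hhd : HasDerivAt h (deriv h z) z :=
    (hd.differentiableAt (isOpen_ball.mem_nhds hz)).hasDerivAt
  have hdz := hden z hz
  have hwder : HasDerivAt w
      ((deriv h z * (h z + 1) - (h z - 1) * deriv h z) / (h z + 1) ^ 2) z :=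
    (hhd.sub_const 1).div (hhd.add_const 1) hdz
  have hSP := schwarzPick hwd hwm hz
  rw [hwder.deriv] at hSP
  set A := ‖deriv h z‖ with hA
  set s := normSq (h z + 1) with hs
  set t := normSq (h z - 1) with ht
  set R := ‖z‖ ^ 2 with hR
  have hspos : 0 < s := normSq_pos.2 hdz
  have habs1 : ‖(deriv h z * (h z + 1) - (h z - 1) * deriv h z) / (h z + 1) ^ 2‖
      = 2 * A / s := by
    have e : deriv h z * (h z + 1) - (h z - 1) * deriv h z = 2 * deriv h z := by ring
    rw [e, norm_div, norm_mul, norm_pow, Complex.sq_norm]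
    norm_num
    rfl
  have habs2 : ‖w z‖ ^ 2 = t / s := by
    simp only [hwdef, norm_div, div_pow, Complex.sq_norm, ht, hs]
  rw [habs1, habs2] at hSP
  have hSP' : 2 * A * (1 - R) ≤ s - t := by
    have h2 := mul_le_mul_of_nonneg_left hSP hspos.le
    calc 2 * A * (1 - R) = s * (2 * A / s * (1 - R)) := by field_simp
      _ ≤ s * (1 - t / s) := h2
      _ = s - t := by field_simp
  have hk := hkey (h z)
  rw [← hs, ← ht] at hk
  linarith

theorem F1_log_deriv_bound
    (f g : ℂ → ℂ)
    (hf : DifferentiableOn ℂ f (ball (0 : ℂ) 1))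
    (hg : DifferentiableOn ℂ g (ball (0 : ℂ) 1))
    (hf0 : f 0 = 0) (hg0 : g 0 = 0)
    (hf0' : deriv f 0 = 1) (hg0' : deriv g 0 = 1)
    (hfne : ∀ z ∈ ball (0 : ℂ) 1, z ≠ 0 → f z ≠ 0)
    (hgne : ∀ z ∈ ball (0 : ℂ) 1, z ≠ 0 → g z ≠ 0)
    (hfg : ∀ z ∈ ball (0 : ℂ) 1, z ≠ 0 → 0 < (f z / g z).re)
    (hgz : ∀ z ∈ ball (0 : ℂ) 1, z ≠ 0 → 0 < (g z / z).re)
    (z : ℂ) (hzball : z ∈ ball (0 : ℂ) 1) (hz0 : z ≠ 0)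
    (r : ℝ) (hr : ‖z‖ = r) :
    ‖z * deriv f z / f z - 1‖ ≤ 4 * r / (1 - r ^ 2) := by
  have h01 : (0:ℂ) ∈ ball (0:ℂ) 1 := mem_ball_self one_pos
  set q := dslope g 0 with hqdef
  set u := dslope f 0 with hudef
  have hqd : DifferentiableOn ℂ q (ball 0 1) :=
    (differentiableOn_dslope (isOpen_ball.mem_nhds h01)).mpr hg
  have hud : DifferentiableOn ℂ u (ball 0 1) :=
    (differentiableOn_dslope (isOpen_ball.mem_nhds h01)).mpr hf
  have hq0 : q 0 = 1 := by rw [hqdef, dslope_same, hg0']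
  have hu0 : u 0 = 1 := by rw [hudef, dslope_same, hf0']
  have hqx : ∀ x : ℂ, x ≠ 0 → q x = g x / x := by
    intro x hx
    rw [hqdef, dslope_of_ne _ hx, slope_def_field, hg0, sub_zero, sub_zero]
  have hux : ∀ x : ℂ, x ≠ 0 → u x = f x / x := by
    intro x hx
    rw [hudef, dslope_of_ne _ hx, slope_def_field, hf0, sub_zero, sub_zero]
  have hqre : ∀ x ∈ ball (0:ℂ) 1, 0 < (q x).re := by
    intro x hx
    rcases eq_or_ne x 0 with rfl | hx0
    · rw [hq0]; norm_num
    · rw [hqx x hx0]; exact hgz x hx hx0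
  have hqne : ∀ x ∈ ball (0:ℂ) 1, q x ≠ 0 := by
    intro x hx hc
    have := hqre x hx; rw [hc] at this; simp at this
  set p := fun x => u x / q x with hpdef
  have hpd : DifferentiableOn ℂ p (ball 0 1) := hud.div hqd hqne
  have hpre : ∀ x ∈ ball (0:ℂ) 1, 0 < (p x).re := by
    intro x hx
    rcases eq_or_ne x 0 with rfl | hx0
    · simp only [hpdef, hq0, hu0, div_one, Complex.one_re]; norm_num
    · have hgx := hgne x hx hx0
      have hpx : p x = f x / g x := by
        simp only [hpdef]
        rw [hux x hx0, hqx x hx0]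
        field_simp
      rw [hpx]; exact hfg x hx hx0
  have hpne : ∀ x ∈ ball (0:ℂ) 1, p x ≠ 0 := by
    intro x hx hc
    have := hpre x hx; rw [hc] at this; simp at this
  have hupq : ∀ x ∈ ball (0:ℂ) 1, u x = p x * q x := by
    intro x hx
    simp only [hpdef]
    rw [div_mul_cancel₀ _ (hqne x hx)]
  have hpz : HasDerivAt p (deriv p z) z :=
    (hpd.differentiableAt (isOpen_ball.mem_nhds hzball)).hasDerivAt
  have hqz' : HasDerivAt q (deriv q z) z :=
    (hqd.differentiableAt (isOpen_ball.mem_nhds hzball)).hasDerivAt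
  set dp := deriv p z with hdp
  set dq := deriv q z with hdq
  have huz : HasDerivAt u (dp * q z + p z * dq) z := by
    have h1 : HasDerivAt (fun x => p x * q x) (dp * q z + p z * dq) z := hpz.mul hqz'
    refine h1.congr_of_eventuallyEq ?_
    filter_upwards [isOpen_ball.mem_nhds hzball] with x hx using hupq x hx
  have hfu : f = fun x => x * u x := by
    funext x
    rcases eq_or_ne x 0 with rfl | hx0
    · simp [hf0]
    · rw [hux x hx0]; field_simp
  have hderivf : deriv f z = u z + z * (dp * q z + p z * dq) := by
    conv_lhs => rw [hfu]
    have h1 : HasDerivAt (fun x => x * u x) (1 * u z + z * (dp * q z + p z * dq)) z :=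
      (hasDerivAt_id z).mul huz
    rw [h1.deriv]; ring
  have hfz : f z = z * u z := by rw [hfu]
  have hpzne := hpne z hzball
  have hqzne := hqne z hzball
  have huzval : u z = p z * q z := hupq z hzball
  have hkey : z * deriv f z / f z - 1 = z * dp / p z + z * dq / q z := by
    rw [hderivf, hfz, huzval]
    field_simp
    ring
  rw [hkey]
  -- real estimates
  have hrlt : r < 1 := by
    rw [← hr]; rw [mem_ball_zero_iff] at hzball; exact hzball
  have hrpos : 0 ≤ r := by rw [← hr]; exact norm_nonneg z
  have h1r : 0 < 1 - r ^ 2 := by nlinarith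
  have hPpos : 0 < ‖p z‖ := norm_pos_iff.2 hpzne
  have hQpos : 0 < ‖q z‖ := norm_pos_iff.2 hqzne
  have hcp := carath hpd hpre hzball
  have hcq := carath hqd hqre hzball
  rw [hr] at hcp hcq
  have hcp' : ‖dp‖ * (1 - r ^ 2) ≤ 2 * ‖p z‖ := by
    refine hcp.trans ?_
    have := Complex.re_le_norm (p z)
    linarith
  have hcq' : ‖dq‖ * (1 - r ^ 2) ≤ 2 * ‖q z‖ := by
    refine hcq.trans ?_
    have := Complex.re_le_norm (q z)
    linarith
  have e1 : ‖z * dp / p z‖ ≤ 2 * r / (1 - r ^ 2) := by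
    rw [norm_div, norm_mul, hr]
    rw [div_le_div_iff₀ hPpos h1r]
    nlinarith [norm_nonneg dp]
  have e2 : ‖z * dq / q z‖ ≤ 2 * r / (1 - r ^ 2) := by
    rw [norm_div, norm_mul, hr]
    rw [div_le_div_iff₀ hQpos h1r]
    nlinarith [norm_nonneg dq]
  calc ‖z * dp / p z + z * dq / q z‖
      ≤ ‖z * dp / p z‖ + ‖z * dq / q z‖ := norm_add_le _ _
    _ ≤ 2 * r / (1 - r ^ 2) + 2 * r / (1 - r ^ 2) := add_le_add e1 e2
    _ = 4 * r / (1 - r ^ 2) := by ring
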